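/- For q = 2^(2n+1) and θ = 2^n, the set {t + t^θ : t ∈ F_q} is an index-2 additive subgroup of F_q, equal to the kernel of the map λ : F_q → {±1}, where λ(x) = 1 if X^2 + X + x has a root in F_q and λ(x) = -1 otherwise. -/
import Mathlib
open Finset

private lemma tele5 {R : Type*} [CommRing R] [CharP R 2] (f : ℕ → R) (k : ℕ) :
    (∑ i ∈ range k, f i) + (∑ i ∈ range k, f (i+1)) = f 0 + f k := by
  have h := Finset.sum_range_sub f k
  rw [Finset.sum_sub_distrib, CharTwo.sub_eq_add, CharTwo.sub_eq_add] at h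
  rw [add_comm, add_comm (f 0), ← h, add_comm]

private lemma char2_5 (n : ℕ) (F : Type*) [Field F] [Fintype F]
    (hF : Fintype.card F = 2 ^ (2 * n + 1)) : CharP F 2 := by
  obtain ⟨p, hp⟩ := CharP.exists F
  obtain ⟨k, hpp, hcard⟩ := FiniteField.card F p
  have hd : p ∣ 2 ^ (2*n+1) := hF ▸ hcard ▸ dvd_pow_self p k.ne_zero
  have : p = 2 := (Nat.prime_dvd_prime_iff_eq hpp Nat.prime_two).mp (hpp.dvd_of_dvd_pow hd)
  exact this ▸ hp

theorem stmt_5 (n : ℕ) (F : Type*) [Field F] [Fintype F]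
    (hF : Fintype.card F = 2 ^ (2 * n + 1)) :
    {x : F | ∃ t : F, t + t ^ (2 ^ n) = x} = {x : F | ∃ y : F, y ^ 2 + y = x} ∧
    Nat.card {x : F | ∃ t : F, t + t ^ (2 ^ n) = x} * 2 = 2 ^ (2 * n + 1) := by
  haveI : CharP F 2 := char2_5 n F hF
  haveI : Fact (Nat.Prime 2) := ⟨Nat.prime_two⟩
  have hiter : ∀ (x : F) (m : ℕ), x ^ (2 ^ ((2*n+1) * m)) = x := by
    intro x m
    induction m with
    | zero => simp
    | succ m ih =>
      rw [Nat.mul_succ, pow_add, pow_mul, ih, ← hF, FiniteField.pow_card]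
  have hset : {x : F | ∃ t : F, t + t ^ (2 ^ n) = x} = {x : F | ∃ y : F, y ^ 2 + y = x} := by
    ext x
    simp only [Set.mem_setOf_eq]
    constructor
    · rintro ⟨t, rfl⟩
      refine ⟨∑ i ∈ range n, t ^ (2 ^ i), ?_⟩
      rw [sum_pow_char 2]
      have h2 : ∀ i, (t ^ (2 ^ i)) ^ 2 = t ^ (2 ^ (i+1)) := by
        intro i; rw [← pow_mul, pow_succ]
      simp_rw [h2]
      rw [add_comm (∑ i ∈ range n, t ^ 2 ^ (i+1)), tele5 (fun i => t ^ (2^i)) n]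
      simp [add_comm]
    · rintro ⟨y, rfl⟩
      rcases Nat.eq_zero_or_pos n with hn | hn
      · subst hn
        refine ⟨0, ?_⟩
        have hy : y ^ 2 = y := by
          have := FiniteField.pow_card y
          rwa [hF] at this
        rw [hy]
        simp [CharTwo.add_self_eq_zero]
      · refine ⟨∑ i ∈ range (2*n-1), y ^ (2 ^ (n*i)), ?_⟩
        rw [sum_pow_char_pow]
        have h2 : ∀ i, (y ^ (2 ^ (n*i))) ^ 2 ^ n = y ^ (2 ^ (n*(i+1))) := by
          intro i; rw [← pow_mul, ← pow_add, Nat.mul_succ]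
        simp_rw [h2]
        rw [tele5 (fun i => y ^ (2 ^ (n*i))) (2*n-1)]
        have hlast : y ^ (2 ^ (n * (2*n-1))) = y ^ 2 := by
          have hdecomp : n * (2*n-1) = (2*n+1) * (n-1) + 1 := by
            cases n with
            | zero => omega
            | succ m =>
              have e1 : 2*(m+1)-1 = 2*m+1 := by omega
              have e2 : (m+1)-1 = m := by omega
              rw [e1, e2]; ring
          rw [hdecomp, pow_add, pow_mul, hiter, pow_one]
        rw [hlast]
        simp [add_comm]
  refine ⟨hset, ?_⟩
  rw [hset]
  have hadd : ∀ a b : F, (a+b)^2 + (a+b) = (a^2+a) + (b^2+b) := by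
    intro a b
    rw [add_pow_char a b 2]
    ring
  let f : F →+ F := ⟨⟨fun y => y^2 + y, by simp⟩, hadd⟩
  have hrange : {x : F | ∃ y : F, y ^ 2 + y = x} = (f.range : Set F) := by
    ext x; simp [f, AddMonoidHom.mem_range, eq_comm]
  have hker : (f.ker : Set F) = {0, 1} := by
    ext z
    simp only [SetLike.mem_coe, AddMonoidHom.mem_ker, Set.mem_insert_iff, Set.mem_singleton_iff]
    show z^2 + z = 0 ↔ _
    constructor
    · intro h
      have hz : z * (z + 1) = 0 := by linear_combination h
      rcases mul_eq_zero.mp hz with h1 | h1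
      · exact Or.inl h1
      · have := eq_neg_of_add_eq_zero_left h1
        rw [CharTwo.neg_eq] at this
        exact Or.inr this
    · rintro (rfl | rfl)
      · simp
      · rw [one_pow]; exact CharTwo.add_self_eq_zero 1
  have h1 : Nat.card F = Nat.card (F ⧸ f.ker) * Nat.card f.ker :=
    AddSubgroup.card_eq_card_quotient_mul_card_addSubgroup f.ker
  have h2 : Nat.card (F ⧸ f.ker) = Nat.card f.range :=
    Nat.card_congr (QuotientAddGroup.quotientKerEquivRange f).toEquiv
  have h3 : Nat.card f.ker = 2 := by
    rw [← SetLike.coe_sort_coe, hker, Nat.card_coe_set_eq, Set.ncard_pair zero_ne_one]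
  rw [Nat.card_eq_fintype_card, hF, h2, h3] at h1
  rw [hrange, SetLike.coe_sort_coe]
  exact h1.symm
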